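/- Fix n ≥ 1 and let Q(x) = x². Let F be the distribution over valuation curves supported on V^{(1)}, …, V^{(n)}, where V^{(i)}(x) = min( 2^{i+1}·x, 2^{2i+1} ) and Pr[V = V^{(i)}] = 4^{−i}/β with β = Σ_{j=1}^n 4^{−j}. Then: (i) the uncapped posted-price mechanism at price 1 has expected welfare E[ V(d_V(1)) − Q(d_V(1)) ] = n/β ≥ 3n; and (ii) for every integer C' ≥ 1, the safe-price auction satisfies W(M(C')) ≤ 20. Hence no safe-price auction approximates the optimal cap-and-price welfare within a factor better than Ω(n) on this instance. -/

import Mathlib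

open MeasureTheory ProbabilityTheory

noncomputable section

/-- The marginal value of the `j`-th license under the curve `V`. -/
def marg (V : ℕ → ℝ) (j : ℕ) : ℝ := V j - V (j - 1)

/-- A valuation curve: `V 0 = 0`, nondecreasing, nonincreasing marginal values,
and only finitely many nonzero marginal values. -/
def IsValuation (V : ℕ → ℝ) : Prop :=
  V 0 = 0 ∧ Monotone V ∧ (∀ j : ℕ, 1 ≤ j → marg V (j + 1) ≤ marg V j) ∧
    ∃ N : ℕ, ∀ j : ℕ, N ≤ j → marg V j = 0

/-- A social cost function: `Q 0 = 0`, nondecreasing, and (discretely) convex. -/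
def IsCost (Q : ℕ → ℝ) : Prop :=
  Q 0 = 0 ∧ Monotone Q ∧ ∀ x : ℕ, 1 ≤ x → Q x - Q (x - 1) ≤ Q (x + 1) - Q x

/-- The demand of a valuation curve at price `p`:
`sup { j ≥ 1 : marg V j ≥ p } ∈ ℕ ∪ {∞}` (with `sup ∅ = 0`). -/
def dem (V : ℕ → ℝ) (p : ℝ) : ℕ∞ :=
  sSup {j : ℕ∞ | ∃ k : ℕ, j = (k : ℕ∞) ∧ 1 ≤ k ∧ p ≤ marg V k}

/-- Number of licenses sold to curve `V` under cap `C` (possibly `∞`) and price floor `p`. -/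
def sold (C : ℕ∞) (p : ℝ) (V : ℕ → ℝ) : ℕ := (min C (dem V p)).toNat

/-- The safe price for cap `C`: the average social cost `Q C / C` per license. -/
def safeP (Q : ℕ → ℝ) (C : ℕ) : ℝ := Q C / C

/-- Truth-telling expected welfare of the no-ceiling cap-and-price auction `M(C,p)`
for a distribution `F` over (combined) valuation curves. -/
def Wfl (F : Measure (ℕ → ℝ)) (Q : ℕ → ℝ) (C : ℕ∞) (p : ℝ) : ℝ :=
  ∫ V, (V (sold C p V) - Q (sold C p V)) ∂F

/-- Number of licenses sold under cap `C`, price floor `p`, and price ceiling `pbar`. -/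
def xceil (C : ℕ) (p pbar : ℝ) (V : ℕ → ℝ) : ℕ :=
  if (C : ℕ∞) ≤ dem V pbar then (dem V pbar).toNat else sold (C : ℕ∞) p V

/-- Truth-telling expected welfare of the cap-and-price auction `M(C,p,pbar)`. -/
def Wceil (F : Measure (ℕ → ℝ)) (Q : ℕ → ℝ) (C : ℕ) (p pbar : ℝ) : ℝ :=
  ∫ V, (V (xceil C p pbar V) - Q (xceil C p pbar V)) ∂F

/-- The combined valuation curve of a profile of valuation curves. -/
def comb {n : ℕ} (Vp : Fin n → ℕ → ℝ) (x : ℕ) : ℝ :=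
  sSup {s : ℝ | ∃ y : Fin n → ℕ, (∑ i, y i) = x ∧ s = ∑ i, Vp i (y i)}

open Classical in
/-- Product of a family of probability measures (0 if the family fails to consist
of probability measures). -/
def piProb {ι : Type*} [Fintype ι] {α : ι → Type*} [∀ i, MeasurableSpace (α i)]
    (μ : ∀ i, Measure (α i)) : Measure (∀ i, α i) :=
  if h : ∀ i, IsProbabilityMeasure (μ i) then
    haveI := h
    Measure.pi μ
  else 0

/-- Truth-telling expected welfare of `M(C,p)` for independent firms with
valuation distributions `F i`, computed via the combined valuation curve. -/
def Wcomb {n : ℕ} (F : Fin n → Measure (ℕ → ℝ)) (Q : ℕ → ℝ) (C : ℕ∞) (p : ℝ) : ℝ :=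
  ∫ Vp, (comb Vp (sold C p (comb Vp)) - Q (sold C p (comb Vp))) ∂(piProb F)

/-- Truth-telling expected welfare of `M(C,p,pbar)` for independent firms. -/
def WceilComb {n : ℕ} (F : Fin n → Measure (ℕ → ℝ)) (Q : ℕ → ℝ) (C : ℕ) (p pbar : ℝ) : ℝ :=
  ∫ Vp, (comb Vp (xceil C p pbar (comb Vp)) - Q (xceil C p pbar (comb Vp))) ∂(piProb F)

/-- `W^{(1)}`: the expected optimal welfare from allocating licenses to a single firm. -/
def W1 {n : ℕ} (F : Fin n → Measure (ℕ → ℝ)) (Q : ℕ → ℝ) : ℝ :=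
  ∫ Vp, sSup {w : ℝ | ∃ (i : Fin n) (x : ℕ), w = Vp i x - Q x} ∂(piProb F)

/-- The per-license price in the uniform-price auction with cap `C` and floor `pf`,
given a bid profile `b`. -/
def priceOf {n : ℕ} (C : ℕ) (pf : ℝ) (b : Fin n → ℕ → ℝ) : ℝ :=
  if (∑ i, dem (b i) pf) < (C : ℕ∞) then pf else comb b C - comb b (C - 1)

/-- A (measurable) tie-breaking allocation rule for the uniform-price auction with
cap `C` and price floor `pf`. -/
def IsAllocRule {n : ℕ} (C : ℕ) (pf : ℝ) (alloc : (Fin n → ℕ → ℝ) → Fin n → ℕ) : Prop :=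
  Measurable alloc ∧
    ∀ b : Fin n → ℕ → ℝ, (∀ i, IsValuation (b i)) →
      (((∑ i, dem (b i) pf) < (C : ℕ∞)) → ∀ i, alloc b i = (dem (b i) pf).toNat) ∧
      (((C : ℕ∞) ≤ ∑ i, dem (b i) pf) →
        (∑ i, alloc b i) = C ∧
          ∀ y : Fin n → ℕ, (∑ i, y i) = C → (∑ i, b i (y i)) ≤ ∑ i, b i (alloc b i))

/-- The strategy `σi` never overbids: with probability one the bid is a valuation
curve pointwise below the true valuation. -/
def NoOverbid (σi : Kernel (ℕ → ℝ) (ℕ → ℝ)) : Prop :=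
  ∀ V : ℕ → ℝ, IsValuation V → σi V {B | IsValuation B ∧ ∀ x, B x ≤ V x} = 1

/-- Expected welfare when the firms play the (randomized) strategy profile `σ`. -/
def EqWelfare {n : ℕ} (F : Fin n → Measure (ℕ → ℝ)) (σ : Fin n → Kernel (ℕ → ℝ) (ℕ → ℝ))
    (alloc : (Fin n → ℕ → ℝ) → Fin n → ℕ) (Q : ℕ → ℝ) : ℝ :=
  ∫ Vp, (∫ b, ((∑ i, Vp i (alloc b i)) - Q (∑ i, alloc b i))
      ∂(piProb fun j => σ j (Vp j))) ∂(piProb F)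

/-- Expected utility of firm `i` with valuation `Vi` when every firm plays `σ`. -/
def EUeq {n : ℕ} (F : Fin n → Measure (ℕ → ℝ)) (σ : Fin n → Kernel (ℕ → ℝ) (ℕ → ℝ))
    (alloc : (Fin n → ℕ → ℝ) → Fin n → ℕ) (C : ℕ) (pf : ℝ) (i : Fin n) (Vi : ℕ → ℝ) : ℝ :=
  ∫ Vp, (∫ b, (Vi (alloc b i) - priceOf C pf b * (alloc b i : ℝ))
      ∂(piProb fun j => σ j (Function.update Vp i Vi j))) ∂(piProb F)

/-- Expected utility of firm `i` with valuation `Vi` deviating to the fixed bid `Bt`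
while the others play `σ`. -/
def EUdev {n : ℕ} (F : Fin n → Measure (ℕ → ℝ)) (σ : Fin n → Kernel (ℕ → ℝ) (ℕ → ℝ))
    (alloc : (Fin n → ℕ → ℝ) → Fin n → ℕ) (C : ℕ) (pf : ℝ) (i : Fin n) (Vi Bt : ℕ → ℝ) : ℝ :=
  ∫ Vp, (∫ b, (Vi (alloc b i) - priceOf C pf b * (alloc b i : ℝ))
      ∂(piProb fun j => if j = i then Measure.dirac Bt else σ j (Vp j))) ∂(piProb F)

/-- Bayes–Nash equilibrium of the uniform-price auction with cap `C` and floor `pf`. -/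
def IsBNE {n : ℕ} (F : Fin n → Measure (ℕ → ℝ)) (σ : Fin n → Kernel (ℕ → ℝ) (ℕ → ℝ))
    (alloc : (Fin n → ℕ → ℝ) → Fin n → ℕ) (C : ℕ) (pf : ℝ) : Prop :=
  ∀ (i : Fin n) (Vi : ℕ → ℝ), IsValuation Vi → ∀ Bt : ℕ → ℝ, IsValuation Bt →
    EUdev F σ alloc C pf i Vi Bt ≤ EUeq F σ alloc C pf i Vi

/-- `θ_V = min( d_V(p), d_V(P(C)) )`, as a natural number. -/
def thetaN (Q : ℕ → ℝ) (C : ℕ) (p : ℝ) (V : ℕ → ℝ) : ℕ :=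
  (min (dem V p) (dem V (safeP Q C))).toNat

/-- The `i`-th valuation curve of the hard instance: `min(2^{i+1}·x, 2^{2i+1})`. -/
def Vex (i : ℕ) : ℕ → ℝ := fun x => min ((2 : ℝ) ^ (i + 1) * (x : ℝ)) ((2 : ℝ) ^ (2 * i + 1))

/-- The normalization constant `β = Σ_{j=1}^n 4^{−j}`. -/
def betaN (n : ℕ) : ℝ := ∑ j ∈ Finset.Icc 1 n, ((4 : ℝ)⁻¹) ^ j

/-- The social cost `Q(x) = x²`. -/
def Qsq : ℕ → ℝ := fun x => (x : ℝ) ^ 2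

lemma two_pow_cast (i : ℕ) : ((2^i : ℕ) : ℝ) = (2:ℝ)^i := by push_cast; ring

lemma Vex_le (i x : ℕ) (hx : x ≤ 2^i) : Vex i x = 2^(i+1) * x := by
  unfold Vex
  apply min_eq_left
  have hx' : (x:ℝ) ≤ (2:ℝ)^i := by rw [← two_pow_cast]; exact_mod_cast hx
  have h2 : (0:ℝ) < 2^(i+1) := by positivity
  calc (2:ℝ)^(i+1) * x ≤ (2:ℝ)^(i+1) * 2^i := by nlinarith
    _ = 2^(2*i+1) := by rw [← pow_add]; ring_nf

lemma Vex_ge (i x : ℕ) (hx : 2^i ≤ x) : Vex i x = 2^(2*i+1) := by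
  unfold Vex
  apply min_eq_right
  have hx' : (2:ℝ)^i ≤ (x:ℝ) := by rw [← two_pow_cast]; exact_mod_cast hx
  have h2 : (0:ℝ) < 2^(i+1) := by positivity
  calc (2:ℝ)^(2*i+1) = (2:ℝ)^(i+1) * 2^i := by rw [← pow_add]; ring_nf
    _ ≤ (2:ℝ)^(i+1) * x := by nlinarith

lemma marg_Vex_low (i k : ℕ) (h1 : 1 ≤ k) (h2 : k ≤ 2^i) : marg (Vex i) k = 2^(i+1) := by
  unfold marg
  rw [Vex_le i k h2, Vex_le i (k-1) (le_trans (Nat.sub_le _ _) h2)]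
  rw [Nat.cast_sub h1]
  ring

lemma marg_Vex_high (i k : ℕ) (h2 : 2^i < k) : marg (Vex i) k = 0 := by
  unfold marg
  have h1 : 2^i ≤ k - 1 := by omega
  rw [Vex_ge i k (le_of_lt h2), Vex_ge i (k-1) h1]
  ring

lemma dem_Vex (i : ℕ) (p : ℝ) (hp : 0 < p) (hple : p ≤ 2^(i+1)) :
    dem (Vex i) p = ((2^i : ℕ) : ℕ∞) := by
  unfold dem
  apply le_antisymm
  · apply sSup_le
    rintro j ⟨k, rfl, hk1, hkp⟩
    have hk : k ≤ 2^i := by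
      by_contra hgt
      rw [marg_Vex_high i k (lt_of_not_ge hgt)] at hkp
      linarith
    exact_mod_cast hk
  · apply le_sSup
    exact ⟨2^i, rfl, Nat.one_le_two_pow, by rw [marg_Vex_low i _ Nat.one_le_two_pow le_rfl]; exact hple⟩

lemma dem_Vex_zero (i : ℕ) (p : ℝ) (hp : 2^(i+1) < p) : dem (Vex i) p = 0 := by
  unfold dem
  have : {j : ℕ∞ | ∃ k : ℕ, j = (k : ℕ∞) ∧ 1 ≤ k ∧ p ≤ marg (Vex i) k} = ∅ := by
    ext j
    simp only [Set.mem_setOf_eq, Set.mem_empty_iff_false, iff_false]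
    rintro ⟨k, rfl, hk1, hkp⟩
    rcases le_or_gt k (2^i) with h | h
    · rw [marg_Vex_low i k hk1 h] at hkp; linarith
    · rw [marg_Vex_high i k h] at hkp
      have : (0:ℝ) < 2^(i+1) := by positivity
      linarith
  rw [this, sSup_empty]
  rfl

lemma sold_Vex (i C' : ℕ) (p : ℝ) (hp : 0 < p) (hple : p ≤ 2^(i+1)) :
    sold (C' : ℕ∞) p (Vex i) = min C' (2^i) := by
  unfold sold
  rw [dem_Vex i p hp hple]
  have : ((C':ℕ∞) ⊓ ((2^i : ℕ) : ℕ∞)) = ((min C' (2^i) : ℕ) : ℕ∞) := by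
    rcases le_total C' (2^i) with h | h
    · rw [min_eq_left (by exact_mod_cast h : (C':ℕ∞) ≤ _), min_eq_left h]
    · rw [min_eq_right (by exact_mod_cast h : ((2^i:ℕ):ℕ∞) ≤ _), min_eq_right h]
  rw [this]
  exact ENat.toNat_coe _

lemma sold_Vex_zero (i C' : ℕ) (p : ℝ) (hp : 2^(i+1) < p) :
    sold (C' : ℕ∞) p (Vex i) = 0 := by
  unfold sold
  rw [dem_Vex_zero i p hp]
  simp

lemma safeP_Qsq (C' : ℕ) (h : 1 ≤ C') : safeP Qsq C' = (C' : ℝ) := by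
  unfold safeP Qsq
  have : (C':ℝ) ≠ 0 := by positivity
  field_simp

lemma geo_sum_Icc (c m : ℕ) : ∑ i ∈ Finset.Icc c m, ((1:ℝ)/2)^i ≤ 2 * (1/2)^c := by
  rw [← Finset.Ico_add_one_right_eq_Icc, Finset.sum_Ico_eq_sum_range]
  have h2 : ∀ j, ((1:ℝ)/2)^(c+j) = (1/2)^c * (1/2)^j := fun j => pow_add _ _ _
  simp_rw [h2, ← Finset.mul_sum]
  have h3 : ∑ j ∈ Finset.range (m+1-c), ((1:ℝ)/2)^j ≤ 2 := by
    rw [geom_sum_eq (by norm_num)]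
    have : (0:ℝ) ≤ ((1:ℝ)/2)^(m+1-c) := by positivity
    rw [div_le_iff_of_neg (by norm_num)]
    linarith
  calc ((1:ℝ)/2)^c * ∑ j ∈ Finset.range (m+1-c), ((1:ℝ)/2)^j ≤ (1/2)^c * 2 :=
        mul_le_mul_of_nonneg_left h3 (by positivity)
    _ = 2 * (1/2)^c := by ring

lemma one_le_two_pow_real (k : ℕ) : (1:ℝ) ≤ 2^k := by
  calc (1:ℝ) = 1 ^ k := (one_pow _).symm
    _ ≤ 2^k := pow_le_pow_left₀ (by norm_num) (by norm_num) _

lemma betaN_ge (n : ℕ) (hn : 1 ≤ n) : (1/4 : ℝ) ≤ betaN n := by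
  unfold betaN
  have h1 : (1:ℕ) ∈ Finset.Icc 1 n := by simp [hn]
  calc (1/4:ℝ) = ((4:ℝ)⁻¹)^1 := by norm_num
    _ ≤ _ := Finset.single_le_sum (fun j _ => by positivity) h1

lemma betaN_le (n : ℕ) : betaN n ≤ 1/3 := by
  unfold betaN
  rw [← Finset.Ico_add_one_right_eq_Icc, Finset.sum_Ico_eq_sum_range]
  simp only [pow_add, pow_one]
  rw [← Finset.mul_sum, geom_sum_eq (by norm_num)]
  set x := ((4:ℝ)⁻¹)^(n+1-1) with hxdef
  have hx : (0:ℝ) ≤ x := by positivity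
  have e : (4:ℝ)⁻¹ * ((x - 1) / ((4:ℝ)⁻¹ - 1)) = (1-x)/3 := by ring
  rw [e]
  linarith

lemma dem_one (i : ℕ) : dem (Vex i) 1 = ((2^i : ℕ) : ℕ∞) :=
  dem_Vex i 1 one_pos (one_le_two_pow_real (i+1))

lemma w_one (i : ℕ) : Vex i ((dem (Vex i) 1).toNat) - Qsq ((dem (Vex i) 1).toNat) = (4:ℝ)^i := by
  rw [dem_one, ENat.toNat_coe, Vex_ge i _ le_rfl]
  unfold Qsq
  rw [two_pow_cast]
  have e1 : (2:ℝ)^(2*i+1) = 2 * 4^i := by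
    rw [pow_succ, pow_mul]; norm_num; ring
  have e2 : ((2:ℝ)^i)^2 = 4^i := by
    rw [← pow_mul, mul_comm, pow_mul]; norm_num
  rw [e1, e2]; ring


/-- on the single-firm instance with `Q(x) = x²` and valuation `V⁽ⁱ⁾`
with probability `4^{−i}/β`: (i) the uncapped posted-price mechanism at price 1 has
expected welfare `n/β ≥ 3n`; (ii) every safe-price auction has welfare at most 20. -/
theorem stmt16 (n : ℕ) (hn : 1 ≤ n) :
    ((∑ i ∈ Finset.Icc 1 n, (((4 : ℝ)⁻¹) ^ i / betaN n) *
        (Vex i ((dem (Vex i) 1).toNat) - Qsq ((dem (Vex i) 1).toNat)) = (n : ℝ) / betaN n) ∧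
      3 * (n : ℝ) ≤ (n : ℝ) / betaN n) ∧
    ∀ C' : ℕ, 1 ≤ C' →
      (∑ i ∈ Finset.Icc 1 n, (((4 : ℝ)⁻¹) ^ i / betaN n) *
        (Vex i (sold (C' : ℕ∞) (safeP Qsq C') (Vex i)) -
          Qsq (sold (C' : ℕ∞) (safeP Qsq C') (Vex i)))) ≤ 20 := by

  have hβ4 : (1/4 : ℝ) ≤ betaN n := betaN_ge n hn
  have hβ3 : betaN n ≤ 1/3 := betaN_le n
  have hβpos : (0:ℝ) < betaN n := by linarith
  refine ⟨⟨?_, ?_⟩, ?_⟩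
  · -- part (i) equality
    have hterm : ∀ i ∈ Finset.Icc 1 n, (((4 : ℝ)⁻¹) ^ i / betaN n) *
        (Vex i ((dem (Vex i) 1).toNat) - Qsq ((dem (Vex i) 1).toNat)) = 1 / betaN n := by
      intro i _
      rw [w_one i, div_mul_eq_mul_div]
      congr 1
      rw [← mul_pow]
      norm_num
    rw [Finset.sum_congr rfl hterm, Finset.sum_const, Nat.card_Icc]
    simp only [Nat.add_sub_cancel, nsmul_eq_mul]
    rw [mul_one_div]
  · -- part (i) inequality
    rw [le_div_iff₀ hβpos]
    have hn0 : (0:ℝ) ≤ (n:ℝ) := Nat.cast_nonneg n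
    nlinarith
  · -- part (ii)
    intro C' hC'
    rw [safeP_Qsq C' hC']
    set c := Nat.clog 2 C' with hc
    have hC1 : C' ≤ 2^c := Nat.le_pow_clog one_lt_two C'
    have hCpos : (0:ℝ) < (C':ℝ) := by exact_mod_cast hC'
    -- pointwise bound
    have key : ∀ i ∈ Finset.Icc 1 n, ((4:ℝ)⁻¹)^i *
        (Vex i (sold (C' : ℕ∞) (C' : ℝ) (Vex i)) - Qsq (sold (C' : ℕ∞) (C' : ℝ) (Vex i)))
        ≤ (if i + 1 = c then (1:ℝ) else 0) + (if c ≤ i then 2 * (2:ℝ)^c * (1/2)^i else 0) := by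
      intro i _
      have hfirst : (0:ℝ) ≤ if i + 1 = c then (1:ℝ) else 0 := by split <;> norm_num
      have hsecond : (0:ℝ) ≤ if c ≤ i then 2 * (2:ℝ)^c * (1/2)^i else 0 := by
        split <;> positivity
      rcases le_or_gt C' (2^i) with hA | hB
      · -- case A : C' ≤ 2^i, allocation C'
        have hci : c ≤ i := (Nat.clog_le_iff_le_pow one_lt_two).mpr hA
        have hAr : (C':ℝ) ≤ (2:ℝ)^i := by rw [← two_pow_cast]; exact_mod_cast hA
        have hA2 : (C':ℝ) ≤ (2:ℝ)^(i+1) := by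
          calc (C':ℝ) ≤ (2:ℝ)^i := hAr
            _ ≤ (2:ℝ)^(i+1) := by
              rw [pow_succ]
              nlinarith [one_le_two_pow_real i]
        rw [sold_Vex i C' _ hCpos hA2, min_eq_left hA, Vex_le i C' hA]
        unfold Qsq
        rw [if_pos hci]
        have f1 : ((4:ℝ)⁻¹)^i * 2^(i+1) = 2 * (1/2)^i := by
          rw [pow_succ, ← mul_assoc, ← mul_pow]
          have : (4:ℝ)⁻¹ * 2 = 1/2 := by norm_num
          rw [this]; ring
        have f2 : (C':ℝ) ≤ (2:ℝ)^c := by rw [← two_pow_cast]; exact_mod_cast hC1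
        have f3 : (0:ℝ) ≤ ((4:ℝ)⁻¹)^i := by positivity
        have f4 : (0:ℝ) ≤ ((1:ℝ)/2)^i := by positivity
        nlinarith [sq_nonneg (C':ℝ), mul_le_mul_of_nonneg_left f2 f4]
      · rcases le_or_gt C' (2^(i+1)) with hB2 | hB3
        · -- case B : 2^i < C' ≤ 2^(i+1), allocation 2^i
          have hc2 : ¬ c ≤ i := fun h =>
            absurd ((Nat.clog_le_iff_le_pow one_lt_two).mp h) (by omega)
          have hc1 : c ≤ i + 1 := (Nat.clog_le_iff_le_pow one_lt_two).mpr hB2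
          have hceq : i + 1 = c := by omega
          have hB2r : (C':ℝ) ≤ (2:ℝ)^(i+1) := by rw [← two_pow_cast]; exact_mod_cast hB2
          rw [sold_Vex i C' _ hCpos hB2r, min_eq_right (le_of_lt hB), Vex_ge i _ le_rfl]
          unfold Qsq
          rw [if_pos hceq, two_pow_cast]
          have e1 : (2:ℝ)^(2*i+1) = 2 * 4^i := by
            rw [pow_succ, pow_mul]; norm_num; ring
          have e2 : ((2:ℝ)^i)^2 = 4^i := by
            rw [← pow_mul, mul_comm, pow_mul]; norm_num
          have e3 : ((4:ℝ)⁻¹)^i * (4:ℝ)^i = 1 := by rw [← mul_pow]; norm_num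
          rw [e1, e2]
          nlinarith
        · -- case C : 2^(i+1) < C', allocation 0
          have hB3r : (2:ℝ)^(i+1) < (C':ℝ) := by rw [← two_pow_cast]; exact_mod_cast hB3
          rw [sold_Vex_zero i C' _ hB3r]
          have : Vex i 0 = 0 := by rw [Vex_le i 0 (Nat.zero_le _)]; simp
          rw [this]
          unfold Qsq
          simp only [Nat.cast_zero]
          norm_num
          positivity
    -- sum of the bounds
    have sum1 : ∑ i ∈ Finset.Icc 1 n, (if i + 1 = c then (1:ℝ) else 0) ≤ 1 := by
      have h : ∀ i ∈ Finset.Icc 1 n,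
          (if i + 1 = c then (1:ℝ) else 0) ≤ (if i = c - 1 then (1:ℝ) else 0) := by
        intro i _
        by_cases h1 : i + 1 = c
        · rw [if_pos h1, if_pos (by omega)]
        · rw [if_neg h1]; split <;> norm_num
      calc _ ≤ ∑ i ∈ Finset.Icc 1 n, (if i = c - 1 then (1:ℝ) else 0) :=
            Finset.sum_le_sum h
        _ ≤ 1 := by rw [Finset.sum_ite_eq']; split <;> norm_num
    have sum2 : ∑ i ∈ Finset.Icc 1 n, (if c ≤ i then 2 * (2:ℝ)^c * (1/2)^i else 0) ≤ 4 := by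
      rw [← Finset.sum_filter]
      have hsub : (Finset.Icc 1 n).filter (fun i => c ≤ i) ⊆ Finset.Icc c n := by
        intro i hi
        simp only [Finset.mem_filter, Finset.mem_Icc] at hi ⊢
        omega
      calc ∑ i ∈ (Finset.Icc 1 n).filter (fun i => c ≤ i), 2 * (2:ℝ)^c * (1/2)^i
          ≤ ∑ i ∈ Finset.Icc c n, 2 * (2:ℝ)^c * (1/2)^i :=
            Finset.sum_le_sum_of_subset_of_nonneg hsub (fun i _ _ => by positivity)
        _ = 2 * (2:ℝ)^c * ∑ i ∈ Finset.Icc c n, ((1:ℝ)/2)^i := by rw [Finset.mul_sum]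
        _ ≤ 2 * (2:ℝ)^c * (2 * (1/2)^c) :=
            mul_le_mul_of_nonneg_left (geo_sum_Icc c n) (by positivity)
        _ = 4 * ((2:ℝ)^c * (1/2)^c) := by ring
        _ = 4 := by rw [← mul_pow]; norm_num
    have main : ∑ i ∈ Finset.Icc 1 n, ((4:ℝ)⁻¹)^i *
        (Vex i (sold (C' : ℕ∞) (C' : ℝ) (Vex i)) - Qsq (sold (C' : ℕ∞) (C' : ℝ) (Vex i))) ≤ 5 := by
      calc _ ≤ ∑ i ∈ Finset.Icc 1 n, ((if i + 1 = c then (1:ℝ) else 0) +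
              (if c ≤ i then 2 * (2:ℝ)^c * (1/2)^i else 0)) := Finset.sum_le_sum key
        _ = _ + _ := Finset.sum_add_distrib
        _ ≤ 1 + 4 := add_le_add sum1 sum2
        _ = 5 := by norm_num
    have hrw : ∀ i ∈ Finset.Icc 1 n, (((4 : ℝ)⁻¹) ^ i / betaN n) *
        (Vex i (sold (C' : ℕ∞) (C' : ℝ) (Vex i)) - Qsq (sold (C' : ℕ∞) (C' : ℝ) (Vex i)))
        = (((4 : ℝ)⁻¹) ^ i *
        (Vex i (sold (C' : ℕ∞) (C' : ℝ) (Vex i)) - Qsq (sold (C' : ℕ∞) (C' : ℝ) (Vex i)))) / betaN n := by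
      intro i _
      rw [div_mul_eq_mul_div]
    rw [Finset.sum_congr rfl hrw, ← Finset.sum_div, div_le_iff₀ hβpos]
    nlinarith

end
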